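/- Let N be an odd positive integer and let λ_0, …, λ_N be pairwise distinct positive real numbers. Assume Φ_N^{(j)}(x) ≥ 0 for every real x > 0 and every integer j ≥ 0. Then for every x > 0, every nonnegative integer k with 2k ≤ N, and every vector p = (p_0, …, p_k) ∈ ℝ^{k+1}, one has Σ_{i=0}^{k} Σ_{j=0}^{k} p_i p_j b_{i+j}(x) ≥ 0. -/

import Mathlib

open MeasureTheory intervalIntegral
open scoped ContDiff

private lemma smooth_of_mem_span {N : ℕ} (l : Fin (N+1) → ℝ) (Φ : ℝ → ℝ)
    (hΦmem : Φ ∈ Submodule.span ℝ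
        (Set.range (fun j : Fin (N + 1) => fun x : ℝ => Real.exp (l j * x)))) :
    ContDiff ℝ ∞ Φ := by
  induction hΦmem using Submodule.span_induction with
  | mem f hf =>
      obtain ⟨j, rfl⟩ := hf
      exact Real.contDiff_exp.comp (contDiff_const.mul contDiff_id)
  | zero => exact contDiff_const
  | add f g _ _ hf hg => exact hf.add hg
  | smul c f _ hf => exact hf.const_smul c

private lemma taylor_key {N : ℕ} {Φ : ℝ → ℝ} (hs : ContDiff ℝ ∞ Φ)
    (hΦ0 : ∀ j < N, iteratedDeriv j Φ 0 = 0) (hΦN : iteratedDeriv N Φ 0 = 1)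
    {r : ℕ} (hr : r ≤ N) (x : ℝ) :
    iteratedDeriv (N - r) Φ x
      = x ^ r / r.factorial
        + ∫ t in (0:ℝ)..x, iteratedDeriv (N + 1) Φ t * (x - t) ^ r / r.factorial := by
  have hsm : ∀ m : ℕ, ContDiff ℝ ∞ (iteratedDeriv m Φ) := by
    intro m
    have := hs.iterate_deriv m
    rwa [← iteratedDeriv_eq_iterate] at this
  have hcont : ∀ m : ℕ, Continuous (iteratedDeriv m Φ) := fun m => (hsm m).continuous
  have hder : ∀ (m : ℕ) (t : ℝ),
      HasDerivAt (iteratedDeriv m Φ) (iteratedDeriv (m + 1) Φ t) t := by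
    intro m t
    rw [iteratedDeriv_succ]
    exact (((hsm m).differentiable (by simp)) t).hasDerivAt
  set f : ℝ → ℝ := fun t =>
    ∑ s ∈ Finset.range (r + 1),
      iteratedDeriv (N - r + s) Φ t * (x - t) ^ s / s.factorial with hf
  have hf' : ∀ t : ℝ,
      HasDerivAt f (iteratedDeriv (N + 1) Φ t * (x - t) ^ r / r.factorial) t := by
    intro t
    have hterm : ∀ s ∈ Finset.range (r + 1),
        HasDerivAt (fun t => iteratedDeriv (N - r + s) Φ t * (x - t) ^ s / s.factorial)
          (iteratedDeriv (N - r + s + 1) Φ t * (x - t) ^ s / s.factorial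
            - iteratedDeriv (N - r + s) Φ t * ((s : ℝ) * (x - t) ^ (s - 1)) / s.factorial) t := by
      intro s _
      have hpow : HasDerivAt (fun t : ℝ => (x - t) ^ s)
          ((s : ℝ) * (x - t) ^ (s - 1) * (-1)) t :=
        ((hasDerivAt_id t).const_sub x).pow s
      have := ((hder (N - r + s) t).mul hpow).div_const (s.factorial : ℝ)
      refine this.congr_deriv ?_
      ring
    have hsum := HasDerivAt.fun_sum hterm
    refine hsum.congr_deriv ?_
    rw [Finset.sum_sub_distrib]
    have hB : ∑ s ∈ Finset.range (r + 1),
        iteratedDeriv (N - r + s) Φ t * ((s : ℝ) * (x - t) ^ (s - 1)) / s.factorial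
        = ∑ s ∈ Finset.range r,
          iteratedDeriv (N - r + s + 1) Φ t * (x - t) ^ s / s.factorial := by
      rw [Finset.sum_range_succ' _ r]
      have h0 : iteratedDeriv (N - r + 0) Φ t * ((0 : ℕ) * (x - t) ^ (0 - 1)) /
          (Nat.factorial 0 : ℝ) = 0 := by simp
      rw [h0, add_zero]
      refine Finset.sum_congr rfl fun s _ => ?_
      rw [Nat.factorial_succ]
      have hne : ((s : ℝ) + 1) ≠ 0 := by positivity
      have hfac : (Nat.factorial s : ℝ) ≠ 0 := by
        exact_mod_cast Nat.factorial_ne_zero s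
      push_cast
      field_simp
      ring
    rw [hB, Finset.sum_range_succ, Nat.sub_add_cancel hr]
    abel
  have hint : IntervalIntegrable
      (fun t => iteratedDeriv (N + 1) Φ t * (x - t) ^ r / r.factorial) volume 0 x :=
    (((hcont (N + 1)).mul ((continuous_const.sub continuous_id).pow r)).div_const
      _).intervalIntegrable _ _
  have heq := integral_eq_sub_of_hasDerivAt (fun t _ => hf' t) hint
  have hfx : f x = iteratedDeriv (N - r) Φ x := by
    simp only [hf]
    rw [Finset.sum_eq_single 0]
    · simp
    · intro s hs hs0
      simp [sub_self, zero_pow hs0]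
    · intro h
      simp at h
  have hf0 : f 0 = x ^ r / r.factorial := by
    simp only [hf]
    rw [Finset.sum_eq_single r]
    · rw [Nat.sub_add_cancel hr, hΦN]
      simp
    · intro s hs hsr
      have hlt : N - r + s < N := by
        simp only [Finset.mem_range] at hs
        omega
      rw [hΦ0 _ hlt]
      simp
    · intro h
      simp at h
  rw [hfx, hf0] at heq
  linarith

private lemma sq_sum_eq {k : ℕ} (p : Fin (k + 1) → ℝ) (q : ℝ) :
    (∑ i : Fin (k + 1), p i * q ^ (i : ℕ)) ^ 2
      = ∑ i : Fin (k + 1), ∑ j : Fin (k + 1), p i * p j * q ^ ((i : ℕ) + (j : ℕ)) := by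
  rw [sq, Finset.sum_mul_sum]
  refine Finset.sum_congr rfl fun i _ => Finset.sum_congr rfl fun j _ => ?_
  rw [pow_add]
  ring

theorem hankel_quadratic_form_nonneg
    (N : ℕ) (hN : 0 < N) (hNodd : Odd N)
    (l : Fin (N + 1) → ℝ) (hl : Function.Injective l) (hlpos : ∀ j, 0 < l j)
    (Φ : ℝ → ℝ)
    (hΦmem : Φ ∈ Submodule.span ℝ
        (Set.range (fun j : Fin (N + 1) => fun x : ℝ => Real.exp (l j * x))))
    (hΦ0 : ∀ j < N, iteratedDeriv j Φ 0 = 0)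
    (hΦN : iteratedDeriv N Φ 0 = 1)
    (hΦnonneg : ∀ x : ℝ, 0 < x → ∀ j : ℕ, 0 ≤ iteratedDeriv j Φ x)
    (b : ℕ → ℝ → ℝ)
    (hb : ∀ j ≤ N, b j = fun x => (Nat.factorial j : ℝ) * iteratedDeriv (N - j) Φ x) :
    ∀ x : ℝ, 0 < x → ∀ k : ℕ, 2 * k ≤ N → ∀ p : Fin (k + 1) → ℝ,
      0 ≤ ∑ i : Fin (k + 1), ∑ j : Fin (k + 1), p i * p j * b ((i : ℕ) + (j : ℕ)) x := by
  have hs : ContDiff ℝ ∞ Φ := smooth_of_mem_span l Φ hΦmem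
  have hsm : ∀ m : ℕ, ContDiff ℝ ∞ (iteratedDeriv m Φ) := by
    intro m
    have := hs.iterate_deriv m
    rwa [← iteratedDeriv_eq_iterate] at this
  have hcont : ∀ m : ℕ, Continuous (iteratedDeriv m Φ) := fun m => (hsm m).continuous
  -- nonnegativity of derivatives on [0, ∞)
  have hΦnonneg' : ∀ t : ℝ, 0 ≤ t → ∀ j : ℕ, 0 ≤ iteratedDeriv j Φ t := by
    intro t ht j
    rcases eq_or_lt_of_le ht with h | h
    · subst h
      have htend : Filter.Tendsto (iteratedDeriv j Φ) (nhdsWithin 0 (Set.Ioi 0))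
          (nhds (iteratedDeriv j Φ 0)) :=
        ((hcont j).continuousAt).continuousWithinAt
      refine ge_of_tendsto htend ?_
      filter_upwards [self_mem_nhdsWithin] with u hu
      exact hΦnonneg u hu j
    · exact hΦnonneg t h j
  intro x hx k hk p
  have hle : ∀ i j : Fin (k + 1), (i : ℕ) + (j : ℕ) ≤ N := by
    intro i j
    have hi := i.isLt
    have hj := j.isLt
    omega
  -- value of b at x
  have hbval : ∀ n, n ≤ N → b n x
      = x ^ n + ∫ t in (0:ℝ)..x, iteratedDeriv (N + 1) Φ t * (x - t) ^ n := by
    intro n hn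
    rw [hb n hn]
    simp only
    rw [taylor_key hs hΦ0 hΦN hn x, mul_add]
    have hfac : (Nat.factorial n : ℝ) ≠ 0 := by exact_mod_cast Nat.factorial_ne_zero n
    rw [mul_div_cancel₀ _ hfac, ← intervalIntegral.integral_const_mul]
    congr 1
    refine intervalIntegral.integral_congr fun t _ => ?_
    rw [mul_div_cancel₀ _ hfac]
  -- main identity
  have hident : ∑ i : Fin (k + 1), ∑ j : Fin (k + 1), p i * p j * b ((i : ℕ) + (j : ℕ)) x
      = (∑ i : Fin (k + 1), p i * x ^ (i : ℕ)) ^ 2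
        + ∫ t in (0:ℝ)..x,
            iteratedDeriv (N + 1) Φ t * (∑ i : Fin (k + 1), p i * (x - t) ^ (i : ℕ)) ^ 2 := by
    have hintg2 : ∀ (i j : Fin (k + 1)), IntervalIntegrable
        (fun t => p i * p j * (iteratedDeriv (N + 1) Φ t * (x - t) ^ ((i : ℕ) + (j : ℕ))))
        volume 0 x := by
      intro i j
      exact ((continuous_const.mul ((hcont (N + 1)).mul
        ((continuous_const.sub continuous_id).pow _))).intervalIntegrable _ _)
    calc ∑ i : Fin (k + 1), ∑ j : Fin (k + 1), p i * p j * b ((i : ℕ) + (j : ℕ)) x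
        = ∑ i : Fin (k + 1), ∑ j : Fin (k + 1),
            (p i * p j * x ^ ((i : ℕ) + (j : ℕ))
              + ∫ t in (0:ℝ)..x, p i * p j *
                  (iteratedDeriv (N + 1) Φ t * (x - t) ^ ((i : ℕ) + (j : ℕ)))) := by
          refine Finset.sum_congr rfl fun i _ => Finset.sum_congr rfl fun j _ => ?_
          rw [hbval _ (hle i j), mul_add, intervalIntegral.integral_const_mul]
      _ = (∑ i : Fin (k + 1), ∑ j : Fin (k + 1), p i * p j * x ^ ((i : ℕ) + (j : ℕ)))
            + ∑ i : Fin (k + 1), ∑ j : Fin (k + 1),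
              ∫ t in (0:ℝ)..x, p i * p j *
                  (iteratedDeriv (N + 1) Φ t * (x - t) ^ ((i : ℕ) + (j : ℕ))) := by
          rw [← Finset.sum_add_distrib]
          exact Finset.sum_congr rfl fun i _ => Finset.sum_add_distrib
      _ = (∑ i : Fin (k + 1), p i * x ^ (i : ℕ)) ^ 2
            + ∫ t in (0:ℝ)..x,
              iteratedDeriv (N + 1) Φ t * (∑ i : Fin (k + 1), p i * (x - t) ^ (i : ℕ)) ^ 2 := by
          congr 1
          · exact (sq_sum_eq p x).symm
          · have step1 : ∀ i : Fin (k + 1),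
                ∑ j : Fin (k + 1), (∫ t in (0:ℝ)..x, p i * p j *
                    (iteratedDeriv (N + 1) Φ t * (x - t) ^ ((i : ℕ) + (j : ℕ))))
                  = ∫ t in (0:ℝ)..x, ∑ j : Fin (k + 1), p i * p j *
                      (iteratedDeriv (N + 1) Φ t * (x - t) ^ ((i : ℕ) + (j : ℕ))) :=
              fun i => (intervalIntegral.integral_finset_sum
                (fun j _ => hintg2 i j)).symm
            have step2 : ∑ i : Fin (k + 1), (∫ t in (0:ℝ)..x, ∑ j : Fin (k + 1),
                  p i * p j * (iteratedDeriv (N + 1) Φ t * (x - t) ^ ((i : ℕ) + (j : ℕ))))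
                = ∫ t in (0:ℝ)..x, ∑ i : Fin (k + 1), ∑ j : Fin (k + 1),
                    p i * p j * (iteratedDeriv (N + 1) Φ t * (x - t) ^ ((i : ℕ) + (j : ℕ))) :=
              (intervalIntegral.integral_finset_sum (fun i _ =>
                Continuous.intervalIntegrable (continuous_finset_sum _ fun j _ =>
                  continuous_const.mul ((hcont (N + 1)).mul
                    ((continuous_const.sub continuous_id).pow _))) _ _)).symm
            rw [Finset.sum_congr rfl fun i _ => step1 i, step2]
            refine intervalIntegral.integral_congr fun t _ => ?_
            rw [mul_comm (iteratedDeriv (N + 1) Φ t), sq_sum_eq p (x - t),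
              Finset.sum_mul]
            refine Finset.sum_congr rfl fun i _ => ?_
            rw [Finset.sum_mul]
            refine Finset.sum_congr rfl fun j _ => ?_
            ring
  rw [hident]
  have h1 : (0:ℝ) ≤ (∑ i : Fin (k + 1), p i * x ^ (i : ℕ)) ^ 2 := sq_nonneg _
  have h2 : (0:ℝ) ≤ ∫ t in (0:ℝ)..x,
      iteratedDeriv (N + 1) Φ t * (∑ i : Fin (k + 1), p i * (x - t) ^ (i : ℕ)) ^ 2 := by
    refine intervalIntegral.integral_nonneg hx.le fun u hu => ?_
    exact mul_nonneg (hΦnonneg' u hu.1 (N + 1)) (sq_nonneg _)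
  linarith
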